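/- Let G be a finite abelian group of order n with Davenport constant D, and put m = n + D - 1. Let x = (x_1, ..., x_m) ∈ G^m be a sequence whose maximal repetition ℓ is attained by x_m, and set r = min(D, ℓ). Then there exists an n-element subset I ⊆ [1, m] with m ∈ I such that ∑_{i ∈ I} x_i = n · x_m = 0, i.e., x has a zero-sum subsequence of length n containing the term x_m. -/

import Mathlib

open Finset Pointwise

/-- Scherk's theorem: if `0 ∈ A`, `0 ∈ B` and the only representation of `0` as
`a + b` with `a ∈ A`, `b ∈ B` is `0 + 0`, then `|A + B| ≥ |A| + |B| - 1`. -/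
private theorem scherk_aux {G : Type*} [AddCommGroup G] [Fintype G] [DecidableEq G] :
    ∀ (k : ℕ) (A B : Finset G), B.card ≤ k → (0:G) ∈ A → (0:G) ∈ B →
    (∀ a ∈ A, ∀ b ∈ B, a + b = 0 → a = 0 ∧ b = 0) →
    A.card + B.card ≤ (A + B).card + 1 := by
  intro k
  induction k with
  | zero =>
    intro A B hk h0A h0B _
    have : 0 < B.card := Finset.card_pos.mpr ⟨0, h0B⟩
    omega
  | succ k ih =>
    intro A B hk h0A h0B huniq
    by_cases hex : ∃ e ∈ A, e ≠ 0 ∧ ∃ b ∈ B, b + e ∉ A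
    · obtain ⟨e, heA, hene, b₀, hb₀B, hb₀e⟩ := hex
      set A' := A ∪ B.image (fun b => b + e) with hA'def
      set B' := B.filter (fun b => b + e ∈ A) with hB'def
      have h0A' : (0:G) ∈ A' := Finset.mem_union_left _ h0A
      have h0B' : (0:G) ∈ B' := by
        rw [hB'def, Finset.mem_filter]
        exact ⟨h0B, by simpa using heA⟩
      have huniq' : ∀ a ∈ A', ∀ b ∈ B', a + b = 0 → a = 0 ∧ b = 0 := by
        intro a ha b hb hab
        rw [hB'def, Finset.mem_filter] at hb
        obtain ⟨hbB, hbeA⟩ := hb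
        rcases Finset.mem_union.mp ha with haA | haI
        · exact huniq a haA b hbB hab
        · obtain ⟨c, hcB, rfl⟩ := Finset.mem_image.mp haI
          have h2 : (b + e) + c = 0 := by
            rw [show (b + e) + c = (c + e) + b by abel]; exact hab
          obtain ⟨hbe0, hc0⟩ := huniq (b + e) hbeA c hcB h2
          have h3 : e + b = 0 := by
            have hb : b = -e := eq_neg_of_add_eq_zero_left hbe0
            rw [hb]; abel
          obtain ⟨he0, -⟩ := huniq e heA b hbB h3
          exact absurd he0 hene
      have hsub : A' + B' ⊆ A + B := by
        intro z hz
        obtain ⟨a, ha, b, hb, rfl⟩ := Finset.mem_add.mp hz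
        rw [hB'def, Finset.mem_filter] at hb
        obtain ⟨hbB, hbeA⟩ := hb
        rcases Finset.mem_union.mp ha with haA | haI
        · exact Finset.mem_add.mpr ⟨a, haA, b, hbB, rfl⟩
        · obtain ⟨c, hcB, rfl⟩ := Finset.mem_image.mp haI
          exact Finset.mem_add.mpr ⟨b + e, hbeA, c, hcB, by abel⟩
      have hinj : Function.Injective (fun b : G => b + e) := fun u v huv => by
        simpa using huv
      have himg : (B.image (fun b => b + e)).card = B.card :=
        Finset.card_image_of_injective _ hinj
      have hinter : A ∩ B.image (fun b => b + e) = B'.image (fun b => b + e) := by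
        ext z
        simp only [Finset.mem_inter, Finset.mem_image, hB'def, Finset.mem_filter]
        constructor
        · rintro ⟨hzA, c, hcB, rfl⟩
          exact ⟨c, ⟨hcB, hzA⟩, rfl⟩
        · rintro ⟨c, ⟨hcB, hceA⟩, rfl⟩
          exact ⟨hceA, c, hcB, rfl⟩
      have hB'img : (B'.image (fun b => b + e)).card = B'.card :=
        Finset.card_image_of_injective _ hinj
      have hcardsum : A'.card + B'.card = A.card + B.card := by
        have h1 := Finset.card_union_add_card_inter A (B.image (fun b => b + e))
        rw [hinter, hB'img] at h1
        rw [hA'def]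
        omega
      have hblt : B'.card < B.card := by
        apply Finset.card_lt_card
        constructor
        · exact Finset.filter_subset _ _
        · intro hBB'
          have := hBB' hb₀B
          rw [hB'def, Finset.mem_filter] at this
          exact hb₀e this.2
      have := ih A' B' (by omega) h0A' h0B' huniq'
      have hle : (A' + B').card ≤ (A + B).card := Finset.card_le_card hsub
      omega
    · push_neg at hex
      -- stall case: A + B = A ∪ B and A ∩ B = {0}
      have hAB_sub : A + B ⊆ A ∪ B := by
        intro z hz
        obtain ⟨a, ha, b, hb, rfl⟩ := Finset.mem_add.mp hz
        by_cases ha0 : a = 0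
        · subst ha0; rw [zero_add]; exact Finset.mem_union_right _ hb
        · have := hex a ha ha0 b hb
          rw [add_comm]
          exact Finset.mem_union_left _ this
      have hsub_AB : A ∪ B ⊆ A + B := by
        intro z hz
        rcases Finset.mem_union.mp hz with hzA | hzB
        · exact Finset.mem_add.mpr ⟨z, hzA, 0, h0B, add_zero z⟩
        · exact Finset.mem_add.mpr ⟨0, h0A, z, hzB, zero_add z⟩
      have hinter : A ∩ B ⊆ {0} := by
        intro c hc
        obtain ⟨hcA, hcB⟩ := Finset.mem_inter.mp hc
        rw [Finset.mem_singleton]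
        by_contra hc0
        set d := addOrderOf c with hd
        have hdpos : 0 < d := addOrderOf_pos c
        have hdc : d • c = 0 := addOrderOf_nsmul_eq_zero c
        have hdne : ∀ k, 1 ≤ k → k < d → k • c ≠ 0 := by
          intro k hk1 hkd hkc
          have : d ∣ k := addOrderOf_dvd_of_nsmul_eq_zero hkc
          have := Nat.le_of_dvd (by omega) this
          omega
        have hd2 : 2 ≤ d := by
          by_contra hcon
          have hd1 : d = 1 := by omega
          rw [hd1, one_nsmul] at hdc
          exact hc0 hdc
        have key : ∀ k, 1 ≤ k → k < d → k • c ∈ A := by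
          intro k
          induction k with
          | zero => intro h1k _; omega
          | succ k ihk =>
            intro _ hlt
            rcases Nat.eq_zero_or_pos k with hk0 | hk1
            · subst hk0; simpa using hcA
            · have hkA := ihk hk1 (by omega)
              have hkne := hdne k hk1 (by omega)
              have := hex (k • c) hkA hkne c hcB
              have heq : (k + 1) • c = c + k • c := by
                rw [succ_nsmul]; abel
              rw [heq]; exact this
        have hA : (d - 1) • c ∈ A := key (d - 1) (by omega) (by omega)
        have hsum : (d - 1) • c + c = 0 := by
          rw [← succ_nsmul]
          have : d - 1 + 1 = d := by omega
          rw [this, hdc]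
        obtain ⟨-, hc0'⟩ := huniq _ hA c hcB hsum
        exact hc0 hc0'
      have h1 := Finset.card_union_add_card_inter A B
      have h2 : (A ∩ B).card ≤ 1 := by
        calc (A ∩ B).card ≤ ({0} : Finset G).card := Finset.card_le_card hinter
        _ = 1 := Finset.card_singleton 0
      have h3 : (A ∪ B).card ≤ (A + B).card := Finset.card_le_card hsub_AB
      omega

/-- Key lemma: a family of at least `|G|` elements, each value occurring at most `h`
times, has a nonempty zero-sum subfamily of size at most `h`. -/
private theorem short_zero_sum {G : Type*} [AddCommGroup G] [Fintype G] [DecidableEq G]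
    {ι : Type*} [DecidableEq ι] (y : ι → G) (A : Finset ι) (h : ℕ) (h1 : 1 ≤ h)
    (hmult : ∀ a : G, (A.filter fun i => y i = a).card ≤ h)
    (hcard : Fintype.card G ≤ A.card) :
    ∃ C, C ⊆ A ∧ C.Nonempty ∧ C.card ≤ h ∧ ∑ i ∈ C, y i = 0 := by
  by_cases h0 : ∃ i ∈ A, y i = 0
  · obtain ⟨i, hiA, hyi⟩ := h0
    exact ⟨{i}, Finset.singleton_subset_iff.mpr hiA, ⟨i, Finset.mem_singleton_self i⟩,
      by simpa using h1, by simp [hyi]⟩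
  · by_contra Hno
    push_neg at Hno
    set mult : G → ℕ := fun a => (A.filter fun i => y i = a).card with hmultdef
    set R : ℕ → Finset G := fun r => Finset.univ.filter (fun a : G => ¬(a = 0) ∧ r ≤ mult a)
      with hRdef
    have main : ∀ k, k ≤ h → ∃ X : Finset G, (0:G) ∈ X ∧
        (∀ xx ∈ X, ∃ C, C ⊆ A ∧ C.card ≤ k ∧ ∑ i ∈ C, y i = xx) ∧
        1 + ∑ r ∈ Finset.Icc 1 k, (R r).card ≤ X.card := by
      intro k
      induction k with
      | zero =>
        intro _
        refine ⟨{0}, Finset.mem_singleton_self 0, ?_, ?_⟩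
        · intro xx hxx
          rw [Finset.mem_singleton] at hxx
          exact ⟨∅, Finset.empty_subset A, by simp, by simp [hxx.symm]⟩
        · simp
      | succ k ihk =>
        intro hk1
        obtain ⟨X, h0X, hrep, hXc⟩ := ihk (by omega)
        set B := insert (0:G) (R (k+1)) with hBdef
        have h0nR : (0:G) ∉ R (k+1) := by
          rw [hRdef]; simp
        have h0B : (0:G) ∈ B := Finset.mem_insert_self _ _
        have hBcard : B.card = (R (k+1)).card + 1 := by
          rw [hBdef]
          exact Finset.card_insert_of_notMem h0nR
        -- extension: given a representable xx and b ∈ R (k+1), represent xx + b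
        have hext : ∀ xx ∈ X, ∀ b ∈ R (k+1), ∃ C', C' ⊆ A ∧ C'.Nonempty ∧
            C'.card ≤ k + 1 ∧ ∑ i ∈ C', y i = xx + b := by
          intro xx hxx b hbR
          obtain ⟨C, hCA, hCc, hCσ⟩ := hrep xx hxx
          rw [hRdef, Finset.mem_filter] at hbR
          obtain ⟨-, hb0, hbmult⟩ := hbR
          have hfsub : (C.filter fun i => y i = b) ⊆ (A.filter fun i => y i = b) :=
            Finset.filter_subset_filter _ hCA
          have hflt : (C.filter fun i => y i = b).card < (A.filter fun i => y i = b).card := by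
            have : (C.filter fun i => y i = b).card ≤ C.card := Finset.card_filter_le _ _
            have hAb : (A.filter fun i => y i = b).card = mult b := rfl
            omega
          have hne : ((A.filter fun i => y i = b) \ (C.filter fun i => y i = b)).Nonempty := by
            rw [← Finset.card_pos, Finset.card_sdiff_of_subset hfsub]; omega
          obtain ⟨i, hi⟩ := hne
          rw [Finset.mem_sdiff] at hi
          obtain ⟨hiAf, hiCf⟩ := hi
          rw [Finset.mem_filter] at hiAf
          obtain ⟨hiA, hyib⟩ := hiAf
          have hiC : i ∉ C := fun hiC => hiCf (Finset.mem_filter.mpr ⟨hiC, hyib⟩)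
          refine ⟨insert i C, Finset.insert_subset hiA hCA, Finset.insert_nonempty i C,
            ?_, ?_⟩
          · rw [Finset.card_insert_of_notMem hiC]; omega
          · rw [Finset.sum_insert hiC, hCσ, hyib]
            exact add_comm b xx
        have huniq : ∀ aa ∈ X, ∀ bb ∈ B, aa + bb = 0 → aa = 0 ∧ bb = 0 := by
          intro aa haa bb hbb hsum
          rcases Finset.mem_insert.mp hbb with hbb0 | hbbR
          · subst hbb0; rw [add_zero] at hsum; exact ⟨hsum, rfl⟩
          · exfalso
            obtain ⟨C', hC'A, hC'ne, hC'c, hC'σ⟩ := hext aa haa bb hbbR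
            exact Hno C' hC'A hC'ne (by omega) (hC'σ.trans hsum)
        refine ⟨X + B, ?_, ?_, ?_⟩
        · exact Finset.mem_add.mpr ⟨0, h0X, 0, h0B, add_zero 0⟩
        · intro z hz
          obtain ⟨xx, hxx, bb, hbb, rfl⟩ := Finset.mem_add.mp hz
          rcases Finset.mem_insert.mp hbb with hbb0 | hbbR
          · subst hbb0
            obtain ⟨C, hCA, hCc, hCσ⟩ := hrep xx hxx
            exact ⟨C, hCA, by omega, by rw [add_zero]; exact hCσ⟩
          · obtain ⟨C', hC'A, -, hC'c, hC'σ⟩ := hext xx hxx bb hbbR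
            exact ⟨C', hC'A, hC'c, hC'σ⟩
        · have hscherk := scherk_aux B.card X B le_rfl h0X h0B huniq
          have hIcc : ∑ r ∈ Finset.Icc 1 (k+1), (R r).card
              = ∑ r ∈ Finset.Icc 1 k, (R r).card + (R (k+1)).card :=
            Finset.sum_Icc_succ_top (by omega) _
          omega
    obtain ⟨X, -, -, hXcard⟩ := main h le_rfl
    have hmult0 : mult 0 = 0 := by
      rw [hmultdef]
      simp only []
      rw [Finset.card_eq_zero, Finset.filter_eq_empty_iff]
      intro i hi hyi
      exact h0 ⟨i, hi, hyi⟩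
    have hRcount : ∀ r, (R r).card = ∑ a : G, if (¬(a = 0) ∧ r ≤ mult a) then 1 else 0 := by
      intro r
      rw [hRdef]
      exact Finset.card_filter _ _
    have hsum_eq : ∑ r ∈ Finset.Icc 1 h, (R r).card = A.card := by
      calc ∑ r ∈ Finset.Icc 1 h, (R r).card
          = ∑ r ∈ Finset.Icc 1 h, ∑ a : G, (if (¬(a = 0) ∧ r ≤ mult a) then 1 else 0) :=
            Finset.sum_congr rfl (fun r _ => hRcount r)
        _ = ∑ a : G, ∑ r ∈ Finset.Icc 1 h, (if (¬(a = 0) ∧ r ≤ mult a) then 1 else 0) :=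
            Finset.sum_comm
        _ = ∑ a : G, mult a := by
            refine Finset.sum_congr rfl (fun a _ => ?_)
            by_cases ha : a = 0
            · simp [ha, hmult0]
            · have hma : mult a ≤ h := hmult a
              calc ∑ r ∈ Finset.Icc 1 h, (if (¬(a = 0) ∧ r ≤ mult a) then 1 else 0)
                  = ∑ r ∈ Finset.Icc 1 h, (if r ≤ mult a then 1 else 0) := by
                    refine Finset.sum_congr rfl (fun r _ => ?_)
                    simp [ha]
                _ = ((Finset.Icc 1 h).filter (fun r => r ≤ mult a)).card :=
                    (Finset.card_filter _ _).symm
                _ = (Finset.Icc 1 (mult a)).card := by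
                    congr 1
                    ext r
                    simp only [Finset.mem_filter, Finset.mem_Icc]
                    omega
                _ = mult a := by rw [Nat.card_Icc]; omega
        _ = A.card := (Finset.card_eq_sum_card_fiberwise
              (fun i _ => Finset.mem_univ (y i))).symm
    have hXle : X.card ≤ Fintype.card G := Finset.card_le_univ X
    omega

/-- `D` is the Davenport constant of `G`: every sequence of `D` elements has a
nonempty zero-sum subsequence, and some sequence of `D - 1` elements has none. -/
def IsDavenport (G : Type*) [AddCommGroup G] [Fintype G] [DecidableEq G] (D : ℕ) : Prop :=
  (∀ x : Fin D → G, ∃ I : Finset (Fin D), I.Nonempty ∧ ∑ i ∈ I, x i = 0) ∧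
  (∃ x : Fin (D - 1) → G, ∀ I : Finset (Fin (D - 1)), I.Nonempty → ∑ i ∈ I, x i ≠ 0)

theorem stmt_13 {G : Type*} [AddCommGroup G] [Fintype G] [DecidableEq G] (n D ℓ m r : ℕ)
    (hn : Fintype.card G = n) (hD : IsDavenport G D) (hm : m = n + D - 1)
    (x : Fin m → G) (j : Fin m) (hj : (j : ℕ) = m - 1)
    (hℓ : (Finset.univ.filter (fun i => x i = x j)).card = ℓ)
    (hmax : ∀ a : G, (Finset.univ.filter (fun i => x i = a)).card ≤ ℓ)
    (hr : r = min D ℓ) :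
    ∃ I : Finset (Fin m), I.card = n ∧ j ∈ I ∧
      ∑ i ∈ I, x i = n • x j ∧ (n • x j : G) = 0 := by
  -- basic facts
  have hD1 : 1 ≤ D := by
    rcases Nat.eq_zero_or_pos D with h0 | h
    · exfalso
      subst h0
      obtain ⟨I, hne, -⟩ := hD.1 (fun _ => (0:G))
      obtain ⟨i, -⟩ := hne
      exact i.elim0
    · exact h
  have hn1 : 1 ≤ n := hn ▸ Fintype.card_pos
  set y : Fin m → G := fun i => x i - x j with hydef
  set Z : Finset (Fin m) := Finset.univ.filter (fun i => x i = x j) with hZdef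
  set N : Finset (Fin m) := Zᶜ with hNdef
  have hjZ : j ∈ Z := by
    rw [hZdef, Finset.mem_filter]
    exact ⟨Finset.mem_univ j, rfl⟩
  have hZcard : Z.card = ℓ := hℓ
  have hl1 : 1 ≤ ℓ := by
    have : 0 < Z.card := Finset.card_pos.mpr ⟨j, hjZ⟩
    omega
  have hZm : Z.card ≤ m := by
    have := Finset.card_le_univ Z
    simpa using this
  have hNcard : N.card + ℓ = m := by
    have h1 : N.card = Fintype.card (Fin m) - Z.card := Finset.card_compl Z
    rw [Fintype.card_fin] at h1
    omega
  have hyZ : ∀ i ∈ Z, y i = 0 := by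
    intro i hi
    rw [hZdef, Finset.mem_filter] at hi
    rw [hydef]
    simp [hi.2]
  have hyN : ∀ A : Finset (Fin m), ∀ a : G, (A.filter fun i => y i = a).card ≤ ℓ := by
    intro A a
    have hsub : (A.filter fun i => y i = a) ⊆ (Finset.univ.filter fun i => x i = a + x j) := by
      intro i hi
      rw [Finset.mem_filter] at hi ⊢
      refine ⟨Finset.mem_univ i, ?_⟩
      have h2 := hi.2
      rw [hydef] at h2
      simp only [] at h2
      rw [← h2]
      abel
    exact le_trans (Finset.card_le_card hsub) (hmax (a + x j))
  -- Davenport extraction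
  have extract : ∀ P : Finset (Fin m), D ≤ P.card →
      ∃ B, B ⊆ P ∧ B.Nonempty ∧ ∑ i ∈ B, y i = 0 := by
    intro P hDP
    obtain ⟨P', hP'P, hP'card⟩ := Finset.exists_subset_card_eq hDP
    let e : {v // v ∈ P'} ≃ Fin D := P'.equivFin.trans (finCongr hP'card)
    obtain ⟨I0, hI0ne, hI0σ⟩ := hD.1 (fun q => y ((e.symm q : {v // v ∈ P'}) : Fin m))
    refine ⟨I0.image (fun q => ((e.symm q : {v // v ∈ P'}) : Fin m)), ?_, hI0ne.image _, ?_⟩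
    · intro i hi
      obtain ⟨q, -, rfl⟩ := Finset.mem_image.mp hi
      exact hP'P (e.symm q).2
    · rw [Finset.sum_image]
      · exact hI0σ
      · intro q hq q' hq' heq
        exact e.symm.injective (Subtype.ext heq)
  -- Phase up: grow a zero-sum set inside N until its size is ≥ n - ℓ
  have up : ∀ t (A : Finset (Fin m)), A ⊆ N → ∑ i ∈ A, y i = 0 → n ≤ ℓ + A.card + t →
      ∃ A', A' ⊆ N ∧ ∑ i ∈ A', y i = 0 ∧ n ≤ ℓ + A'.card := by
    intro t
    induction t with
    | zero =>
      intro A hAN hσ hc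
      exact ⟨A, hAN, hσ, by omega⟩
    | succ t iht =>
      intro A hAN hσ hc
      by_cases hle : n ≤ ℓ + A.card
      · exact ⟨A, hAN, hσ, hle⟩
      · have hpool : (N \ A).card + A.card = N.card := Finset.card_sdiff_add_card_eq_card hAN
        have hDpool : D ≤ (N \ A).card := by omega
        obtain ⟨B, hBsub, hBne, hBσ⟩ := extract (N \ A) hDpool
        have hdisj : Disjoint A B := by
          rw [Finset.disjoint_left]
          intro i hiA hiB
          have := hBsub hiB
          rw [Finset.mem_sdiff] at this
          exact this.2 hiA
        have hBcard : 1 ≤ B.card := Finset.card_pos.mpr hBne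
        refine iht (A ∪ B) ?_ ?_ ?_
        · exact Finset.union_subset hAN (hBsub.trans (Finset.sdiff_subset))
        · rw [Finset.sum_union hdisj, hσ, hBσ, add_zero]
        · rw [Finset.card_union_of_disjoint hdisj]; omega
  -- Phase down: shrink by short zero-sum chunks until size ≤ n - 1
  have down : ∀ t (A : Finset (Fin m)), A ⊆ N → ∑ i ∈ A, y i = 0 → n ≤ ℓ + A.card →
      A.card + 1 ≤ n + t →
      ∃ A', A' ⊆ N ∧ ∑ i ∈ A', y i = 0 ∧ n ≤ ℓ + A'.card ∧ A'.card + 1 ≤ n := by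
    intro t
    induction t with
    | zero =>
      intro A hAN hσ hc1 hc2
      exact ⟨A, hAN, hσ, hc1, by omega⟩
    | succ t iht =>
      intro A hAN hσ hc1 hc2
      by_cases hlt : A.card + 1 ≤ n
      · exact ⟨A, hAN, hσ, hc1, hlt⟩
      · have hge : n ≤ A.card := by omega
        obtain ⟨C, hCA, hCne, hCc, hCσ⟩ := short_zero_sum y A ℓ hl1 (hyN A) (by omega)
        have hCcard : 1 ≤ C.card := Finset.card_pos.mpr hCne
        have hsd : (A \ C).card + C.card = A.card := Finset.card_sdiff_add_card_eq_card hCA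
        have hσ' : ∑ i ∈ A \ C, y i = 0 := by
          have h := Finset.sum_sdiff (f := y) hCA
          rw [hCσ, add_zero] at h
          rw [h]; exact hσ
        refine iht (A \ C) ((Finset.sdiff_subset).trans hAN) hσ' (by omega) (by omega)
  obtain ⟨A₁, hA₁N, hA₁σ, hA₁c⟩ := up n ∅ (Finset.empty_subset N) (by simp) (by simp)
  obtain ⟨A, hAN, hAσ, hAc₁, hAc₂⟩ := down A₁.card A₁ hA₁N hA₁σ hA₁c (by omega)
  -- pad with zeros (elements of Z), including j
  have hWpick : n - A.card - 1 ≤ (Z.erase j).card := by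
    rw [Finset.card_erase_of_mem hjZ]
    omega
  obtain ⟨W', hW'sub, hW'card⟩ := Finset.exists_subset_card_eq hWpick
  have hjW' : j ∉ W' := fun hmem => (Finset.notMem_erase j Z) (hW'sub hmem)
  set W : Finset (Fin m) := insert j W' with hWdef
  have hWZ : W ⊆ Z := Finset.insert_subset hjZ (hW'sub.trans (Finset.erase_subset _ _))
  have hWcard : W.card = n - A.card := by
    rw [hWdef, Finset.card_insert_of_notMem hjW', hW'card]
    omega
  have hdisj : Disjoint A W := by
    rw [Finset.disjoint_left]
    intro i hiA hiW
    have hiZ : i ∈ Z := hWZ hiW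
    have hiN : i ∈ N := hAN hiA
    rw [hNdef, Finset.mem_compl] at hiN
    exact hiN hiZ
  refine ⟨A ∪ W, ?_, ?_, ?_, ?_⟩
  · rw [Finset.card_union_of_disjoint hdisj, hWcard]; omega
  · exact Finset.mem_union_right _ (Finset.mem_insert_self j W')
  · have hWσ : ∑ i ∈ W, y i = 0 :=
      Finset.sum_eq_zero (fun i hi => hyZ i (hWZ hi))
    have hIσ : ∑ i ∈ A ∪ W, y i = 0 := by
      rw [Finset.sum_union hdisj, hAσ, hWσ, add_zero]
    have hIcard : (A ∪ W).card = n := by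
      rw [Finset.card_union_of_disjoint hdisj, hWcard]; omega
    have hxy : ∀ i, x i = y i + x j := by
      intro i
      rw [hydef]
      simp
    calc ∑ i ∈ A ∪ W, x i = ∑ i ∈ A ∪ W, (y i + x j) :=
          Finset.sum_congr rfl (fun i _ => hxy i)
      _ = (∑ i ∈ A ∪ W, y i) + (A ∪ W).card • x j := by
          rw [Finset.sum_add_distrib, Finset.sum_const]
      _ = n • x j := by rw [hIσ, hIcard, zero_add]
  · rw [← hn]
    exact card_nsmul_eq_zero
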